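/- arXiv:2004.11811 — 2 statements merged into one kernel-verified Lean document; each statement's English description precedes it below -/
import Mathlib

section
/- For every integer n ≥ 1 and all λ, μ ∈ k with λ ≠ 0, μ ≠ 0 and λ ≠ μ, the k-vector space of Λ_e-module homomorphisms from the band module B(n,λ) to the band module B(n,μ) has dimension n². -/
/-! Common framework: representations of the quiver Q_e / modules over the
generalized Brauer star algebra Λ_e, encoded as a module `V` together with
endomorphisms `v i` (images of the vertex idempotents), `a i` (images of the
arrows; `a i` is the arrow leaving vertex `i`, with `a ⟨e-1⟩` the arrow
`α_e : e → 1`) and `d` (image of the loop `δ`). -/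

namespace GBTA

structure PreRep (R : Type) [CommRing R] (e : ℕ) : Type 1 where
  V : Type
  [instAdd : AddCommGroup V]
  [instMod : Module R V]
  v : Fin e → Module.End R V
  a : Fin e → Module.End R V
  d : Module.End R V

attribute [instance] PreRep.instAdd PreRep.instMod

variable {R : Type} [CommRing R] {e : ℕ}

/-- The (0-based) index of the vertex `e`. -/
def ve (e : ℕ) [NeZero e] : Fin e :=
  ⟨e - 1, by have := Nat.pos_of_ne_zero (NeZero.ne e); omega⟩

/-- The (0-based) index of the vertex `e - 1`. -/
def vem (e : ℕ) [NeZero e] : Fin e :=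
  ⟨e - 2, by have := Nat.pos_of_ne_zero (NeZero.ne e); omega⟩

open Fin.NatCast in
/-- The cycle `C_i`: the composite of the `e` cyclically consecutive arrows
starting with the arrow leaving vertex `i` (composites written right to left). -/
def cyc [NeZero e] (ρ : PreRep R e) (i : Fin e) : Module.End R ρ.V :=
  (((List.range e).reverse).map fun l => ρ.a (i + (l : Fin e))).prod

/-- The defining relations of the generalized Brauer star algebra `Λ_e`. -/
def Satisfies [NeZero e] (ρ : PreRep R e) : Prop :=
  (∀ i j : Fin e, i ≠ j → ρ.v i * ρ.v j = 0) ∧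
  (∀ i : Fin e, ρ.v i * ρ.v i = ρ.v i) ∧
  ((∑ i : Fin e, ρ.v i) = 1) ∧
  (∀ i : Fin e, ρ.a i = ρ.v (i + 1) * ρ.a i * ρ.v i) ∧
  (ρ.d = ρ.v (ve e) * ρ.d * ρ.v (ve e)) ∧
  (ρ.d * ρ.a (vem e) = 0) ∧
  (ρ.a (ve e) * ρ.d = 0) ∧
  (ρ.d * ρ.d = cyc ρ (ve e) * cyc ρ (ve e)) ∧
  (∀ i : Fin e, i ≠ ve e → ρ.a i * (cyc ρ i * cyc ρ i) = 0)

/-- The space of `Λ_e`-module homomorphisms `ρ → σ`: linear maps commuting with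
all the structure maps. -/
def homSet (ρ σ : PreRep R e) : Submodule R (ρ.V →ₗ[R] σ.V) where
  carrier := {f | (∀ i, f ∘ₗ ρ.v i = σ.v i ∘ₗ f) ∧ (∀ i, f ∘ₗ ρ.a i = σ.a i ∘ₗ f) ∧
    f ∘ₗ ρ.d = σ.d ∘ₗ f}
  add_mem' := by
    rintro f g ⟨hfv, hfa, hfd⟩ ⟨hgv, hga, hgd⟩
    exact ⟨fun i => by simp only [LinearMap.add_comp, LinearMap.comp_add, hfv i, hgv i],
      fun i => by simp only [LinearMap.add_comp, LinearMap.comp_add, hfa i, hga i],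
      by simp only [LinearMap.add_comp, LinearMap.comp_add, hfd, hgd]⟩
  zero_mem' := ⟨fun i => by simp, fun i => by simp, by simp⟩
  smul_mem' := by
    rintro c f ⟨hfv, hfa, hfd⟩
    exact ⟨fun i => by simp only [LinearMap.smul_comp, LinearMap.comp_smul, hfv i],
      fun i => by simp only [LinearMap.smul_comp, LinearMap.comp_smul, hfa i],
      by simp only [LinearMap.smul_comp, LinearMap.comp_smul, hfd]⟩

/-- Projectivity of a `Λ_e`-module, via the lifting property in the category of
`Λ_e`-modules. -/
def IsProjective [NeZero e] (P : PreRep R e) : Prop :=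
  Satisfies P ∧
  ∀ (A B : PreRep R e), Satisfies A → Satisfies B →
    ∀ p ∈ homSet A B, Function.Surjective p →
      ∀ g ∈ homSet P B, ∃ h ∈ homSet P A, p ∘ₗ h = g

/-- An endomorphism `f` of `ρ` factors through a projective `Λ_e`-module. -/
def FactorsThroughProjective [NeZero e] (ρ : PreRep R e) (f : ρ.V →ₗ[R] ρ.V) : Prop :=
  ∃ P : PreRep R e, IsProjective P ∧ ∃ g ∈ homSet ρ P, ∃ h ∈ homSet P ρ, f = h ∘ₗ g

/-- "The stable endomorphism ring of `ρ` is isomorphic to the scalars": the identity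
does not factor through a projective, and modulo endomorphisms factoring through
projectives every endomorphism is a scalar multiple of the identity. -/
def StableEndIsoScalars [NeZero e] (ρ : PreRep R e) : Prop :=
  (¬ FactorsThroughProjective ρ LinearMap.id) ∧
  ∀ f ∈ homSet ρ ρ, ∃ c : R, FactorsThroughProjective ρ (f - c • LinearMap.id)

/-- The linear map on `Fin m → W` sending the `src` coordinate to the `dst`
coordinate through `g`, and killing all other coordinates. -/
def mk1 {m : ℕ} {W : Type} [AddCommGroup W] [Module R W] (src dst : Fin m)
    (g : W →ₗ[R] W) : (Fin m → W) →ₗ[R] (Fin m → W) where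
  toFun x := fun r => if r = dst then g (x src) else 0
  map_add' x y := by funext r; by_cases h : r = dst <;> simp [h]
  map_smul' c x := by funext r; by_cases h : r = dst <;> simp [h]

/-- Projection onto the coordinates satisfying `S`. -/
def prj {m : ℕ} {W : Type} [AddCommGroup W] [Module R W] (S : Fin m → Prop)
    [DecidablePred S] : (Fin m → W) →ₗ[R] (Fin m → W) where
  toFun x := fun r => if S r then x r else 0
  map_add' x y := by funext r; by_cases h : S r <;> simp [h]
  map_smul' c x := by funext r; by_cases h : S r <;> simp [h]

/-- Last row index (`e`, 0-based) among `e+1` rows. -/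
def lastRow (e : ℕ) : Fin (e + 1) := ⟨e, Nat.lt_succ_self e⟩

/-- Second-to-last row index (`e-1`, 0-based) among `e+1` rows. -/
def sndRow (e : ℕ) : Fin (e + 1) := ⟨e - 1, by omega⟩

/-- The vertex carrying each of the `e+1` rows: row `r < e-1` sits at vertex `r`,
rows `e-1` and `e` sit at the vertex `e` (0-based index `e-1`). -/
def vrt (e : ℕ) [NeZero e] : Fin (e + 1) → Fin e := fun r =>
  if h : r.val < e - 1 then ⟨r.val, by omega⟩ else ve e


/-- The `n × n` Jordan block with eigenvalue `lam`. -/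
def jordan (R : Type) [CommRing R] (n : ℕ) (lam : R) : Matrix (Fin n) (Fin n) R :=
  Matrix.of fun i j => if i = j then lam else if (j : ℕ) = (i : ℕ) + 1 then 1 else 0

/-- The band module `B(n, lam)`. Rows `0, …, e-2` are the components `k^n` at the
vertices `1, …, e-1`; rows `e-1` and `e` are the two copies of `k^n` at vertex `e`. -/
@[reducible] def band (R : Type) [CommRing R] (e : ℕ) [NeZero e] (n : ℕ) (lam : R) : PreRep R e where
  V := Fin (e + 1) → Fin n → R
  v i := prj fun r => vrt e r = i
  a j :=
    if j.val = e - 1 then mk1 (sndRow e) ⟨0, by omega⟩ LinearMap.id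
    else if j.val = e - 2 then mk1 ⟨e - 2, by omega⟩ (lastRow e) LinearMap.id
    else mk1 ⟨j.val, Nat.lt_succ_of_lt j.isLt⟩ ⟨j.val + 1, Nat.succ_lt_succ j.isLt⟩ LinearMap.id
  d := mk1 (sndRow e) (lastRow e) (Matrix.mulVecLin (jordan R n lam))

/-- The band module `B(1, s)` (with `δ` acting through the scalar `s`); the standard
basis vector `c_i` (`1 ≤ i ≤ e-1`) is the `i-1`-st coordinate, `c_e` the `e-1`-st and
`c_{e+1}` the `e`-th. -/
@[reducible] def band1 (R : Type) [CommRing R] (e : ℕ) [NeZero e] (s : R) : PreRep R e where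
  V := Fin (e + 1) → R
  v i := prj fun r => vrt e r = i
  a j :=
    if j.val = e - 1 then mk1 (sndRow e) ⟨0, by omega⟩ LinearMap.id
    else if j.val = e - 2 then mk1 ⟨e - 2, by omega⟩ (lastRow e) LinearMap.id
    else mk1 ⟨j.val, Nat.lt_succ_of_lt j.isLt⟩ ⟨j.val + 1, Nat.succ_lt_succ j.isLt⟩ LinearMap.id
  d := mk1 (sndRow e) (lastRow e) (s • LinearMap.id)

/-- The projective module `P_e`, with basis `b_{i,1}, b_{i,2}` (row `i-1`) for
`1 ≤ i ≤ e-1` and `b_{e,1}, b_{e,2}` (row `e-1`), `b_{e,3}, b_{e,4}` (row `e`). -/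
@[reducible] def Pe (R : Type) [CommRing R] (e : ℕ) [NeZero e] : PreRep R e where
  V := Fin (e + 1) → Fin 2 → R
  v i := prj fun r => vrt e r = i
  a j :=
    if j.val = e - 1 then mk1 (sndRow e) ⟨0, by omega⟩ LinearMap.id
    else if j.val = e - 2 then
      mk1 ⟨e - 2, by omega⟩ (sndRow e) (Matrix.mulVecLin !![0, 0; 1, 0])
        + mk1 ⟨e - 2, by omega⟩ (lastRow e) (Matrix.mulVecLin !![0, 0; 0, 1])
    else mk1 ⟨j.val, Nat.lt_succ_of_lt j.isLt⟩ ⟨j.val + 1, Nat.succ_lt_succ j.isLt⟩ LinearMap.id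
  d := mk1 (sndRow e) (lastRow e) (Matrix.mulVecLin !![1, 0; 0, 0])
    + mk1 (lastRow e) (lastRow e) (Matrix.mulVecLin !![0, 0; 1, 0])

/-- `Mdef R e τ`: the representation with basis `m_1, …, m_{e+1}` (rows `0, …, e`),
`α_j(m_j) = m_{j+1}` for `j ≤ e-2`, `α_{e-1}(m_{e-1}) = τ · m_{e+1}`,
`α_e(m_e) = m_1`, `δ(m_e) = m_{e+1}`.  For `τ = 0` this is the string module `W`. -/
@[reducible] def Mdef (R : Type) [CommRing R] (e : ℕ) [NeZero e] (t : R) : PreRep R e where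
  V := Fin (e + 1) → R
  v i := prj fun r => vrt e r = i
  a j :=
    if j.val = e - 1 then mk1 (sndRow e) ⟨0, by omega⟩ LinearMap.id
    else if j.val = e - 2 then mk1 ⟨e - 2, by omega⟩ (lastRow e) (t • LinearMap.id)
    else mk1 ⟨j.val, Nat.lt_succ_of_lt j.isLt⟩ ⟨j.val + 1, Nat.succ_lt_succ j.isLt⟩ LinearMap.id
  d := mk1 (sndRow e) (lastRow e) LinearMap.id

/-- The uniserial module `U_{[i,j]}` (with `1 ≤ i ≤ j ≤ e`, 1-based). -/
@[reducible] def U (R : Type) [CommRing R] (e i j : ℕ) : PreRep R e where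
  V := Fin (j + 1 - i) → R
  v t := prj fun r => i - 1 + r.val = t.val
  a t :=
    if h : i ≤ t.val + 1 ∧ t.val + 1 ≤ j - 1 then
      mk1 ⟨t.val + 1 - i, by omega⟩ ⟨t.val + 2 - i, by omega⟩ LinearMap.id
    else 0
  d := 0

/-- The uniserial projective module `P_i` (`i0` is the 0-based index of the vertex),
with basis `p_0, …, p_{2e}` following the cycle of arrows twice around. -/
@[reducible] def Puni (R : Type) [CommRing R] (e : ℕ) [NeZero e] (i0 : ℕ) : PreRep R e where
  V := Fin (2 * e + 1) → R
  v t := prj fun r => (i0 + r.val) % e = t.val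
  a t := ∑ l : Fin (2 * e),
    if (i0 + l.val) % e = t.val then mk1 l.castSucc l.succ LinearMap.id else 0
  d := 0

/-- The simple module `S_e` at the vertex `e`. -/
@[reducible] def Se (R : Type) [CommRing R] (e : ℕ) [NeZero e] : PreRep R e where
  V := R
  v i := if i = ve e then 1 else 0
  a _ := 0
  d := 0

/-- Block upper triangular endomorphism `(x, y) ↦ (f x + θ y, f y)` of `V × V`. -/
def blk {V : Type} [AddCommGroup V] [Module R V] (f th : Module.End R V) :
    Module.End R (V × V) where
  toFun p := (f p.1 + th p.2, f p.2)
  map_add' p q := by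
    simp only [Prod.fst_add, Prod.snd_add, map_add, Prod.mk_add_mk, Prod.mk.injEq, and_true]
    abel
  map_smul' c p := by
    simp only [Prod.smul_fst, Prod.smul_snd, map_smul, Prod.smul_mk, Prod.mk.injEq,
      smul_add, RingHom.id_apply, and_self]

section Ext
variable [NeZero e]

/-- The data of a self-extension of `ρ`: for each generator of `Λ_e`, the
off-diagonal block of its action on `ρ.V × ρ.V`. -/
abbrev Cochain (ρ : PreRep R e) : Type :=
  (Fin e → Module.End R ρ.V) × (Fin e → Module.End R ρ.V) × Module.End R ρ.V

/-- The self-extension of `ρ` determined by the cochain `θ`. -/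
@[reducible] def extRep (ρ : PreRep R e) (th : Cochain ρ) : PreRep R e where
  V := ρ.V × ρ.V
  v i := blk (ρ.v i) (th.1 i)
  a i := blk (ρ.a i) (th.2.1 i)
  d := blk ρ.d th.2.2

/-- `θ` is a cocycle precisely when the corresponding extension is a `Λ_e`-module. -/
def IsCocycle (ρ : PreRep R e) (th : Cochain ρ) : Prop := Satisfies (extRep ρ th)

/-- The coboundary of `φ`; extensions differing by a coboundary are equivalent. -/
def bnd (ρ : PreRep R e) (phi : Module.End R ρ.V) : Cochain ρ :=
  (fun i => ρ.v i * phi - phi * ρ.v i, fun i => ρ.a i * phi - phi * ρ.a i,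
    ρ.d * phi - phi * ρ.d)

/-- `Ext¹_{Λ_e}(ρ, ρ)`, i.e. the space of self-extensions of `ρ` modulo equivalence
(equivalently cocycles modulo coboundaries), is one-dimensional. -/
def ExtSelfOneDimensional (ρ : PreRep R e) : Prop :=
  ∃ th0 : Cochain ρ, IsCocycle ρ th0 ∧ (∀ phi, th0 ≠ bnd ρ phi) ∧
    ∀ th : Cochain ρ, IsCocycle ρ th → ∃ (c : R) (phi : Module.End R ρ.V),
      th = c • th0 + bnd ρ phi

end Ext


/-- The endomorphism algebra of a representation. -/
def endAlg (ρ : PreRep R e) : Subalgebra R (Module.End R ρ.V) where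
  carrier := {f | (∀ i, f * ρ.v i = ρ.v i * f) ∧ (∀ i, f * ρ.a i = ρ.a i * f) ∧
    f * ρ.d = ρ.d * f}
  mul_mem' := by
    rintro f g ⟨hfv, hfa, hfd⟩ ⟨hgv, hga, hgd⟩
    refine ⟨fun i => ?_, fun i => ?_, ?_⟩
    · rw [mul_assoc, hgv i, ← mul_assoc, hfv i, mul_assoc]
    · rw [mul_assoc, hga i, ← mul_assoc, hfa i, mul_assoc]
    · rw [mul_assoc, hgd, ← mul_assoc, hfd, mul_assoc]
  one_mem' := ⟨fun i => by rw [one_mul, mul_one], fun i => by rw [one_mul, mul_one],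
    by rw [one_mul, mul_one]⟩
  add_mem' := by
    rintro f g ⟨hfv, hfa, hfd⟩ ⟨hgv, hga, hgd⟩
    exact ⟨fun i => by rw [add_mul, mul_add, hfv i, hgv i],
      fun i => by rw [add_mul, mul_add, hfa i, hga i],
      by rw [add_mul, mul_add, hfd, hgd]⟩
  zero_mem' := ⟨fun i => by rw [zero_mul, mul_zero], fun i => by rw [zero_mul, mul_zero],
    by rw [zero_mul, mul_zero]⟩
  algebraMap_mem' c :=
    ⟨fun i => Algebra.commutes c (ρ.v i), fun i => Algebra.commutes c (ρ.a i),
      Algebra.commutes c ρ.d⟩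

/-- The endomorphism `τ` of `B(1,λ)` (and of `W`): `c_e ↦ c_{e+1}`, all other
standard basis vectors to `0`. -/
def tau (R : Type) [CommRing R] (e : ℕ) : (Fin (e + 1) → R) →ₗ[R] (Fin (e + 1) → R) :=
  mk1 (sndRow e) (lastRow e) LinearMap.id

/-- The map `r₁ : B(1,λ) → P_e` (with parameter `μ` the coefficient on `b_{e,3}`):
`c_i ↦ b_{i,2}` for `1 ≤ i ≤ e-1`, `c_e ↦ b_{e,2} + μ b_{e,3}`, `c_{e+1} ↦ b_{e,4}`. -/
def r1 (R : Type) [CommRing R] (e : ℕ) (mu : R) :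
    (Fin (e + 1) → R) →ₗ[R] (Fin (e + 1) → Fin 2 → R) where
  toFun x := fun r c => if c = 1 then x r else if r = lastRow e then mu * x (sndRow e) else 0
  map_add' x y := by
    funext r c
    by_cases h : c = 1
    · simp [h]
    · by_cases h2 : r = lastRow e <;> simp [h, h2, mul_add]
  map_smul' t x := by
    funext r c
    by_cases h : c = 1
    · simp [h]
    · by_cases h2 : r = lastRow e <;> simp [h, h2] <;> ring

/-- The map `r₂ : B(1,λ) → P_e`: `c_e ↦ b_{e,4}`, all other basis vectors to `0`. -/
def r2 (R : Type) [CommRing R] (e : ℕ) :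
    (Fin (e + 1) → R) →ₗ[R] (Fin (e + 1) → Fin 2 → R) where
  toFun x := fun r c => if r = lastRow e ∧ c = 1 then x (sndRow e) else 0
  map_add' x y := by
    funext r c
    by_cases h : r = lastRow e ∧ c = 1 <;> simp [h]
  map_smul' t x := by
    funext r c
    by_cases h : r = lastRow e ∧ c = 1 <;> simp [h]

/-- The map `s₁ : P_e → B(1,λ)`: `b_{e,1} ↦ c_e`, `b_{e,2} ↦ c_{e+1}`,
`b_{e,3} ↦ λ c_{e+1}`, `b_{i,1} ↦ c_i`; zero on `b_{e,4}` and the `b_{i,2}`. -/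
def s1 (R : Type) [CommRing R] (e : ℕ) (lam : R) :
    (Fin (e + 1) → Fin 2 → R) →ₗ[R] (Fin (e + 1) → R) where
  toFun y := fun r =>
    if r = lastRow e then y (sndRow e) 1 + lam * y (lastRow e) 0 else y r 0
  map_add' x y := by
    funext r
    by_cases h : r = lastRow e <;> simp [h, mul_add] <;> ring
  map_smul' t x := by
    funext r
    by_cases h : r = lastRow e <;> simp [h] <;> ring

/-- The map `s₂ : P_e → B(1,λ)`: `b_{e,1} ↦ c_{e+1}`, all other basis vectors to `0`. -/
def s2 (R : Type) [CommRing R] (e : ℕ) :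
    (Fin (e + 1) → Fin 2 → R) →ₗ[R] (Fin (e + 1) → R) where
  toFun y := fun r => if r = lastRow e then y (sndRow e) 0 else 0
  map_add' x y := by funext r; by_cases h : r = lastRow e <;> simp [h]
  map_smul' t x := by funext r; by_cases h : r = lastRow e <;> simp [h]

/-- The map `g : W → P_e`, `w_e ↦ b_{e,3}`, `w_{e+1} ↦ b_{e,4}`, `w_j ↦ 0`. -/
def gW (R : Type) [CommRing R] (e : ℕ) :
    (Fin (e + 1) → R) →ₗ[R] (Fin (e + 1) → Fin 2 → R) where
  toFun x := fun r c =>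
    if r = lastRow e then (if c = 0 then x (sndRow e) else x (lastRow e)) else 0
  map_add' x y := by
    funext r c
    by_cases h : r = lastRow e <;> by_cases h2 : c = 0 <;> simp [h, h2]
  map_smul' t x := by
    funext r c
    by_cases h : r = lastRow e <;> by_cases h2 : c = 0 <;> simp [h, h2]

/-- The map `h : P_e → W`, `b_{e,1} ↦ w_e`, `b_{j,1} ↦ w_j`, `b_{e,3} ↦ w_{e+1}`,
zero on `b_{e,2}`, `b_{e,4}` and the `b_{j,2}`. -/
def hW (R : Type) [CommRing R] (e : ℕ) :
    (Fin (e + 1) → Fin 2 → R) →ₗ[R] (Fin (e + 1) → R) where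
  toFun y := fun r => y r 0
  map_add' x y := rfl
  map_smul' t x := rfl



section Aux

variable {K : Type} [Field K]

lemma prj_apply'' {m : ℕ} {W : Type} [AddCommGroup W] [Module K W] (S : Fin m → Prop)
    [DecidablePred S] (x : Fin m → W) (r : Fin m) :
    prj (R := K) S x r = if S r then x r else 0 := rfl

lemma mk1_apply'' {m : ℕ} {W : Type} [AddCommGroup W] [Module K W] (src dst : Fin m)
    (g : W →ₗ[K] W) (x : Fin m → W) :
    mk1 src dst g x = Pi.single dst (g (x src)) := by
  funext r
  by_cases h : r = dst <;> simp [mk1, Pi.single_apply, h]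

lemma prj_single {m : ℕ} {W : Type} [AddCommGroup W] [Module K W] (S : Fin m → Prop)
    [DecidablePred S] (r' : Fin m) (y : W) (h : S r') :
    prj (R := K) S (Pi.single r' y) = Pi.single r' y := by
  funext r
  by_cases hr : r = r'
  · subst hr; simp [prj, h]
  · simp [prj, Pi.single_eq_of_ne hr]

lemma mk1_comp {m : ℕ} {W : Type} [AddCommGroup W] [Module K W]
    (s₁ d₁ s₂ d₂ : Fin m) (g₁ g₂ : W →ₗ[K] W) :
    (mk1 (R := K) s₂ d₂ g₂) ∘ₗ mk1 s₁ d₁ g₁ =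
      if d₁ = s₂ then mk1 s₁ d₂ (g₂ ∘ₗ g₁) else 0 := by
  apply LinearMap.ext; intro x
  funext r
  by_cases h : d₁ = s₂
  · subst h
    by_cases hr : r = d₂ <;> simp [mk1, hr]
  · have h' : ¬ (s₂ = d₁) := fun hc => h hc.symm
    by_cases hr : r = d₂ <;> simp [mk1, hr, h, h']

lemma mk1_comp_prj {m : ℕ} {W : Type} [AddCommGroup W] [Module K W]
    (S : Fin m → Prop) [DecidablePred S] (s d : Fin m) (g : W →ₗ[K] W) :
    (mk1 (R := K) s d g) ∘ₗ prj S = if S s then mk1 s d g else 0 := by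
  apply LinearMap.ext; intro x
  funext r
  by_cases hs : S s
  · by_cases hr : r = d <;> simp [mk1, prj, hr, hs]
  · by_cases hr : r = d <;> simp [mk1, prj, hr, hs]

lemma prj_comp_mk1 {m : ℕ} {W : Type} [AddCommGroup W] [Module K W]
    (S : Fin m → Prop) [DecidablePred S] (s d : Fin m) (g : W →ₗ[K] W) :
    prj S ∘ₗ (mk1 (R := K) s d g) = if S d then mk1 s d g else 0 := by
  apply LinearMap.ext; intro x
  funext r
  by_cases hd : S d
  · by_cases hr : r = d
    · subst hr; simp [mk1, prj, hd]
    · simp [mk1, prj, hr, hd]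
  · by_cases hr : r = d
    · subst hr; simp [mk1, prj, hd]
    · simp [mk1, prj, hr, hd]

lemma mul_jordan {n : ℕ} (M : Matrix (Fin n) (Fin n) K) (lam : K) (i j : Fin n) :
    (M * jordan K n lam) i j =
      lam * M i j +
        (if h : 1 ≤ j.val then M i ⟨j.val - 1, lt_of_le_of_lt (Nat.sub_le _ _) j.isLt⟩ else 0) := by
  rw [Matrix.mul_apply]
  have hterm : ∀ l : Fin n, M i l * jordan K n lam l j =
      (if l = j then lam * M i j else 0) + (if (j : ℕ) = (l : ℕ) + 1 then M i l else 0) := by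
    intro l
    by_cases hl : l = j
    · subst hl
      simp [jordan, mul_comm, show ¬((l : ℕ) = (l : ℕ) + 1) by omega]
    · have : ¬ ((l : ℕ) = (j : ℕ)) := fun hc => hl (Fin.ext hc)
      by_cases hc : (j : ℕ) = (l : ℕ) + 1 <;>
        simp [jordan, hl, hc, this, Fin.ext_iff]
  rw [Finset.sum_congr rfl fun l _ => hterm l, Finset.sum_add_distrib]
  congr 1
  · simp
  · by_cases h1 : 1 ≤ j.val
    · rw [dif_pos h1]
      have : ∀ l : Fin n, (if (j : ℕ) = (l : ℕ) + 1 then M i l else 0) =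
          (if l = (⟨j.val - 1, lt_of_le_of_lt (Nat.sub_le _ _) j.isLt⟩ : Fin n) then M i l else 0) := by
        intro l
        refine if_congr ?_ rfl rfl
        rw [Fin.ext_iff]
        constructor
        · intro h; simp; omega
        · intro h; simp at h; omega
      rw [Finset.sum_congr rfl fun l _ => this l, Finset.sum_ite_eq']
      simp
    · rw [dif_neg h1]
      apply Finset.sum_eq_zero
      intro l _
      rw [if_neg]
      omega

lemma jordan_mul {n : ℕ} (M : Matrix (Fin n) (Fin n) K) (mu : K) (i j : Fin n) :
    (jordan K n mu * M) i j =
      mu * M i j + (if h : i.val + 1 < n then M ⟨i.val + 1, h⟩ j else 0) := by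
  rw [Matrix.mul_apply]
  have hterm : ∀ l : Fin n, jordan K n mu i l * M l j =
      (if l = i then mu * M i j else 0) + (if (l : ℕ) = (i : ℕ) + 1 then M l j else 0) := by
    intro l
    by_cases hl : l = i
    · subst hl
      simp [jordan, show ¬((l : ℕ) = (l : ℕ) + 1) by omega]
    · have hne : ¬ ((i : ℕ) = (l : ℕ)) := fun hc => hl (Fin.ext hc.symm)
      by_cases hc : (l : ℕ) = (i : ℕ) + 1 <;>
        simp [jordan, hl, hc, hne, Fin.ext_iff]
  rw [Finset.sum_congr rfl fun l _ => hterm l, Finset.sum_add_distrib]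
  congr 1
  · simp
  · by_cases h1 : i.val + 1 < n
    · rw [dif_pos h1]
      have : ∀ l : Fin n, (if (l : ℕ) = (i : ℕ) + 1 then M l j else 0) =
          (if l = (⟨i.val + 1, h1⟩ : Fin n) then M l j else 0) := by
        intro l
        refine if_congr ?_ rfl rfl
        rw [Fin.ext_iff]
      rw [Finset.sum_congr rfl fun l _ => this l, Finset.sum_ite_eq']
      simp
    · rw [dif_neg h1]
      apply Finset.sum_eq_zero
      intro l _
      rw [if_neg]
      have := l.isLt
      omega

lemma jordan_conj_zero {n : ℕ} {lam mu : K} (hne : lam ≠ mu)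
    {M : Matrix (Fin n) (Fin n) K}
    (h : M * jordan K n lam = jordan K n mu * M) : M = 0 := by
  have key : ∀ m : ℕ, ∀ i j : Fin n, (n - 1 - i.val) + j.val = m → M i j = 0 := by
    intro m
    induction m using Nat.strong_induction_on with
    | _ m ih =>
      intro i j hm
      have he := congrFun (congrFun h i) j
      rw [mul_jordan, jordan_mul] at he
      have hin := i.isLt
      have hL : (if h : 1 ≤ j.val then
          M i ⟨j.val - 1, lt_of_le_of_lt (Nat.sub_le _ _) j.isLt⟩ else (0:K)) = 0 := by
        split
        · next h1 => exact ih ((n - 1 - i.val) + (j.val - 1)) (by omega) i _ rfl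
        · rfl
      have hR : (if h : i.val + 1 < n then M ⟨i.val + 1, h⟩ j else (0:K)) = 0 := by
        split
        · next h1 => exact ih ((n - 1 - (i.val + 1)) + j.val) (by omega) _ j rfl
        · rfl
      rw [hL, hR, add_zero, add_zero] at he
      have hz : (lam - mu) * M i j = 0 := by rw [sub_mul, he, sub_self]
      exact (mul_eq_zero.mp hz).resolve_left (sub_ne_zero.mpr hne)
  ext i j
  exact key _ i j rfl

end Aux


/-- For every `n ≥ 1` and nonzero `λ ≠ μ`, the space of
`Λ_e`-module homomorphisms `B(n, λ) → B(n, μ)` has `k`-dimension `n²`. -/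
theorem band_hom_dim (k : Type) [Field k] (e : ℕ) (he : 2 ≤ e) [NeZero e]
    (n : ℕ) (hn : 1 ≤ n) (lam mu : k) (hlam : lam ≠ 0) (hmu : mu ≠ 0)
    (hne : lam ≠ mu) :
    Module.finrank k (homSet (band k e n lam) (band k e n mu)) = n ^ 2 := by
  classical
  -- basic row facts
  have hsndval : (sndRow e).val = e - 1 := rfl
  have hlstval : (lastRow e).val = e := rfl
  have hsnd_ne_lst : sndRow e ≠ lastRow e := by
    rw [Fin.ne_iff_vne, hsndval, hlstval]; omega
  have hvrt_snd : vrt e (sndRow e) = ve e := dif_neg (by rw [hsndval]; omega)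
  have hvrt_lst : vrt e (lastRow e) = ve e := dif_neg (by rw [hlstval]; omega)
  have hvrt_ve : ∀ r : Fin (e + 1), vrt e r = ve e → r = sndRow e ∨ r = lastRow e := by
    intro r h
    by_cases hlt : r.val < e - 1
    · exfalso
      rw [vrt, dif_pos hlt] at h
      have := congrArg Fin.val h
      simp only [ve] at this
      omega
    · have hr := r.isLt
      rcases Nat.lt_or_ge r.val e with h1 | h1
      · left; apply Fin.ext; rw [hsndval]; omega
      · right; apply Fin.ext; rw [hlstval]; omega
  have hvrt_inj : ∀ r r' : Fin (e + 1), r.val < e - 1 → vrt e r = vrt e r' → r' = r := by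
    intro r r' h hh
    simp only [vrt] at hh
    rw [dif_pos h] at hh
    by_cases h' : r'.val < e - 1
    · rw [dif_pos h'] at hh
      exact Fin.ext (by simpa [Fin.ext_iff] using hh.symm)
    · rw [dif_neg h'] at hh
      exfalso
      have := congrArg Fin.val hh
      simp only [ve] at this
      omega
  -- the embedding
  let Φ : ((Fin n → k) →ₗ[k] (Fin n → k)) →ₗ[k]
      ((Fin (e + 1) → Fin n → k) →ₗ[k] (Fin (e + 1) → Fin n → k)) :=
    { toFun := fun g => mk1 (sndRow e) (lastRow e) g
      map_add' := fun g g' => by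
        apply LinearMap.ext; intro x; funext r
        by_cases hr : r = lastRow e <;> simp [mk1, hr]
      map_smul' := fun c g => by
        apply LinearMap.ext; intro x; funext r
        by_cases hr : r = lastRow e <;> simp [mk1, hr] }
  have hΦ : ∀ g, Φ g = mk1 (sndRow e) (lastRow e) g := fun g => rfl
  have hinj : Function.Injective Φ := by
    intro g g' hgg
    apply LinearMap.ext; intro y
    have h1 := congrFun (LinearMap.congr_fun hgg (Pi.single (sndRow e) y)) (lastRow e)
    rw [hΦ, hΦ, mk1_apply'', mk1_apply'', Pi.single_eq_same, Pi.single_eq_same,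
      Pi.single_eq_same] at h1
    exact h1
  have hrange : LinearMap.range Φ = homSet (band k e n lam) (band k e n mu) := by
    apply le_antisymm
    · rintro F ⟨g, rfl⟩
      rw [hΦ]
      refine ⟨fun i => ?_, fun j => ?_, ?_⟩
      · show mk1 (sndRow e) (lastRow e) g ∘ₗ prj (fun r => vrt e r = i)
          = prj (fun r => vrt e r = i) ∘ₗ mk1 (sndRow e) (lastRow e) g
        rw [mk1_comp_prj, prj_comp_mk1, hvrt_snd, hvrt_lst]
      · rcases Nat.lt_trichotomy j.val (e - 2) with hj | hj | hj
        · have hj' : ¬ (j.val = e - 1) := by omega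
          have hj'' : ¬ (j.val = e - 2) := by omega
          show mk1 (sndRow e) (lastRow e) g ∘ₗ (band k e n lam).a j
            = (band k e n mu).a j ∘ₗ mk1 (sndRow e) (lastRow e) g
          simp only [band, if_neg hj', if_neg hj'']
          rw [mk1_comp, mk1_comp, if_neg, if_neg]
          all_goals
            intro hc
            have hval := congrArg Fin.val hc
            simp only [lastRow, sndRow] at hval
            omega
        · have hj' : ¬ (j.val = e - 1) := by omega
          show mk1 (sndRow e) (lastRow e) g ∘ₗ (band k e n lam).a j
            = (band k e n mu).a j ∘ₗ mk1 (sndRow e) (lastRow e) g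
          simp only [band, if_neg hj', if_pos hj]
          rw [mk1_comp, mk1_comp, if_neg, if_neg]
          all_goals
            intro hc
            have hval := congrArg Fin.val hc
            simp only [lastRow, sndRow] at hval
            omega
        · have hj' : j.val = e - 1 := by have := j.isLt; omega
          show mk1 (sndRow e) (lastRow e) g ∘ₗ (band k e n lam).a j
            = (band k e n mu).a j ∘ₗ mk1 (sndRow e) (lastRow e) g
          simp only [band, if_pos hj']
          rw [mk1_comp, mk1_comp, if_neg, if_neg]
          all_goals
            intro hc
            have hval := congrArg Fin.val hc
            simp only [lastRow, sndRow] at hval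
            omega
      · show mk1 (sndRow e) (lastRow e) g ∘ₗ
            mk1 (sndRow e) (lastRow e) (Matrix.mulVecLin (jordan k n lam))
          = mk1 (sndRow e) (lastRow e) (Matrix.mulVecLin (jordan k n mu)) ∘ₗ
            mk1 (sndRow e) (lastRow e) g
        rw [mk1_comp, mk1_comp, if_neg hsnd_ne_lst.symm, if_neg hsnd_ne_lst.symm]
    · rintro f ⟨hv, ha, hd⟩
      replace hv : ∀ i, f ∘ₗ prj (R := k) (fun r => vrt e r = i)
          = prj (fun r => vrt e r = i) ∘ₗ f := hv
      -- extraction helper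
      have extract : ∀ (s d : Fin (e + 1)) (g g' : (Fin n → k) →ₗ[k] (Fin n → k)),
          f ∘ₗ mk1 s d g = mk1 s d g' ∘ₗ f →
          ∀ (r r' : Fin (e + 1)) (y : Fin n → k),
            f (Pi.single d (g ((Pi.single r' y : Fin (e + 1) → Fin n → k) s))) r
              = if r = d then g' (f (Pi.single r' y) s) else 0 := by
        intro s d g g' hc r r' y
        have h1 := congrFun (LinearMap.congr_fun hc (Pi.single r' y)) r
        simp only [LinearMap.comp_apply] at h1
        rw [mk1_apply'', mk1_apply''] at h1
        rw [h1, Pi.single_apply]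
      -- vertex block structure
      have hA : ∀ (r r' : Fin (e + 1)), vrt e r ≠ vrt e r' → ∀ y : Fin n → k,
          f (Pi.single r' y) r = 0 := by
        intro r r' hrr y
        have h1 := congrFun (LinearMap.congr_fun (hv (vrt e r')) (Pi.single r' y)) r
        simp only [LinearMap.comp_apply] at h1
        rw [prj_single (fun s => vrt e s = vrt e r') r' y rfl, prj_apply'', if_neg hrr] at h1
        exact h1
      -- the arrows, reduced
      have haE : f ∘ₗ mk1 (sndRow e) (⟨0, by omega⟩ : Fin (e + 1)) LinearMap.id
          = mk1 (sndRow e) ⟨0, by omega⟩ LinearMap.id ∘ₗ f := by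
        have h1 := ha ⟨e - 1, by omega⟩
        simpa [band] using h1
      have haE2 : f ∘ₗ mk1 (⟨e - 2, by omega⟩ : Fin (e + 1)) (lastRow e) LinearMap.id
          = mk1 ⟨e - 2, by omega⟩ (lastRow e) LinearMap.id ∘ₗ f := by
        have h1 := ha ⟨e - 2, by omega⟩
        simpa [band, show ¬ (e - 2 = e - 1) by omega] using h1
      have haJ : ∀ (jv : ℕ) (hjv : jv < e - 2),
          f ∘ₗ mk1 (⟨jv, by omega⟩ : Fin (e + 1)) ⟨jv + 1, by omega⟩ LinearMap.id
            = mk1 (⟨jv, by omega⟩ : Fin (e + 1)) ⟨jv + 1, by omega⟩ LinearMap.id ∘ₗ f := by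
        intro jv hjv
        have h1 := ha ⟨jv, by omega⟩
        simpa [band, show ¬ (jv = e - 1) by omega, show ¬ (jv = e - 2) by omega] using h1
      replace hd : f ∘ₗ mk1 (sndRow e) (lastRow e) (Matrix.mulVecLin (jordan k n lam))
          = mk1 (sndRow e) (lastRow e) (Matrix.mulVecLin (jordan k n mu)) ∘ₗ f := hd
      -- diagonal chain
      have F0 : ∀ y : Fin n → k, f (Pi.single (⟨0, by omega⟩ : Fin (e + 1)) y) ⟨0, by omega⟩
          = f (Pi.single (sndRow e) y) (sndRow e) := by
        intro y
        have h1 := extract _ _ _ _ haE ⟨0, by omega⟩ (sndRow e) y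
        rw [if_pos rfl] at h1
        simpa only [Pi.single_eq_same, LinearMap.id_coe, id_eq] using h1
      have Fstep : ∀ (jv : ℕ) (hjv : jv < e - 2), ∀ y : Fin n → k,
          f (Pi.single (⟨jv + 1, by omega⟩ : Fin (e + 1)) y) ⟨jv + 1, by omega⟩
            = f (Pi.single (⟨jv, by omega⟩ : Fin (e + 1)) y) ⟨jv, by omega⟩ := by
        intro jv hjv y
        have h1 := extract _ _ _ _ (haJ jv hjv) ⟨jv + 1, by omega⟩ ⟨jv, by omega⟩ y
        rw [if_pos rfl] at h1
        simpa only [Pi.single_eq_same, LinearMap.id_coe, id_eq] using h1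
      have Fdiag : ∀ (jv : ℕ) (hjv : jv ≤ e - 2), ∀ y : Fin n → k,
          f (Pi.single (⟨jv, by omega⟩ : Fin (e + 1)) y) ⟨jv, by omega⟩
            = f (Pi.single (sndRow e) y) (sndRow e) := by
        intro jv
        induction jv with
        | zero => intro _ y; exact F0 y
        | succ jv ih =>
          intro hjv y
          rw [Fstep jv (by omega) y]
          exact ih (by omega) y
      have Flast : ∀ y : Fin n → k, f (Pi.single (lastRow e) y) (lastRow e)
          = f (Pi.single (sndRow e) y) (sndRow e) := by
        intro y
        have h1 := extract _ _ _ _ haE2 (lastRow e) ⟨e - 2, by omega⟩ y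
        rw [if_pos rfl] at h1
        simp only [Pi.single_eq_same, LinearMap.id_coe, id_eq] at h1
        rw [h1]
        exact Fdiag (e - 2) le_rfl y
      have Fcol : ∀ r : Fin (e + 1), r ≠ lastRow e → ∀ y : Fin n → k,
          f (Pi.single (lastRow e) y) r = 0 := by
        intro r hr y
        have h1 := extract _ _ _ _ haE2 r ⟨e - 2, by omega⟩ y
        rw [if_neg hr] at h1
        simpa only [Pi.single_eq_same, LinearMap.id_coe, id_eq] using h1
      -- the Jordan intertwining
      have Fdel : ∀ y : Fin n → k,
          f (Pi.single (lastRow e) ((jordan k n lam).mulVecLin y)) (lastRow e)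
            = (jordan k n mu).mulVecLin (f (Pi.single (sndRow e) y) (sndRow e)) := by
        intro y
        have h1 := extract _ _ _ _ hd (lastRow e) (sndRow e) y
        rw [if_pos rfl] at h1
        simpa only [Pi.single_eq_same] using h1
      let Xl : (Fin n → k) →ₗ[k] (Fin n → k) :=
        LinearMap.proj (sndRow e) ∘ₗ f ∘ₗ LinearMap.single k (fun _ => Fin n → k) (sndRow e)
      have hXl : ∀ y, Xl y = f (Pi.single (sndRow e) y) (sndRow e) := fun y => rfl
      have hcomm : Xl ∘ₗ (jordan k n lam).mulVecLin = (jordan k n mu).mulVecLin ∘ₗ Xl := by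
        apply LinearMap.ext; intro y
        simp only [LinearMap.comp_apply, hXl]
        rw [← Flast, Fdel]
      have hM : LinearMap.toMatrix' Xl * jordan k n lam
          = jordan k n mu * LinearMap.toMatrix' Xl := by
        have h1 := congrArg LinearMap.toMatrix' hcomm
        rwa [LinearMap.toMatrix'_comp, LinearMap.toMatrix'_comp, ← Matrix.toLin'_apply',
          ← Matrix.toLin'_apply', LinearMap.toMatrix'_toLin', LinearMap.toMatrix'_toLin'] at h1
      have hX0 : ∀ y : Fin n → k, f (Pi.single (sndRow e) y) (sndRow e) = 0 := by
        intro y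
        have hz : Xl = 0 := LinearMap.toMatrix'.map_eq_zero_iff.mp (jordan_conj_zero hne hM)
        rw [← hXl, hz]
        rfl
      -- conclude
      refine ⟨LinearMap.proj (lastRow e) ∘ₗ f ∘ₗ LinearMap.single k (fun _ => Fin n → k) (sndRow e), ?_⟩
      rw [hΦ]
      apply LinearMap.ext; intro x
      funext r
      have hx : x = ∑ r' : Fin (e + 1), Pi.single r' (x r') := (Finset.univ_sum_single x).symm
      have hfx : f x r = ∑ r' : Fin (e + 1), f (Pi.single r' (x r')) r := by
        conv_lhs => rw [hx]
        rw [map_sum]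
        exact Finset.sum_apply r Finset.univ _
      have hterm : ∀ r' : Fin (e + 1), (r = lastRow e → r' ≠ sndRow e → f (Pi.single r' (x r')) r = 0)
          ∧ (r ≠ lastRow e → f (Pi.single r' (x r')) r = 0) := by
        intro r'
        constructor
        · intro hr hr'
          subst hr
          by_cases hvv : vrt e (lastRow e) = vrt e r'
          · rcases hvrt_ve r' (by rw [← hvv, hvrt_lst]) with h | h
            · exact absurd h hr'
            · subst h
              rw [Flast]
              exact hX0 _
          · exact hA _ _ hvv _
        · intro hr
          by_cases hvv : vrt e r = vrt e r'
          · by_cases hlt : r.val < e - 1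
            · have heq := hvrt_inj r r' hlt hvv
              rw [heq]
              have hrval : r = (⟨r.val, by omega⟩ : Fin (e + 1)) := Fin.ext rfl
              rw [hrval, Fdiag r.val (by omega)]
              exact hX0 _
            · rcases hvrt_ve r (by rw [vrt, dif_neg hlt]) with h | h
              · subst h
                rcases hvrt_ve r' (by rw [← hvv, hvrt_snd]) with h' | h'
                · subst h'; exact hX0 _
                · subst h'; exact Fcol _ hsnd_ne_lst _
              · exact absurd h hr
          · exact hA _ _ hvv _
      by_cases hr : r = lastRow e
      · subst hr
        rw [mk1_apply'', Pi.single_eq_same, hfx]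
        rw [Finset.sum_eq_single (sndRow e)]
        · rfl
        · intro r' _ hr'; exact (hterm r').1 rfl hr'
        · intro hmem; exact absurd (Finset.mem_univ _) hmem
      · rw [mk1_apply'', Pi.single_eq_of_ne hr, hfx]
        exact (Finset.sum_eq_zero fun r' _ => (hterm r').2 hr).symm
  rw [← hrange, LinearMap.finrank_range_of_inj hinj, Module.finrank_linearMap,
    Module.finrank_fin_fun, pow_two]

end GBTA
end

section
/- Let M be the free rank-one k[t]/(t²)-module M = (k[t]/(t²))·m with v_e·m = m (so M is concentrated at vertex e), α_i acting as zero for all 1 ≤ i ≤ e and δ(m) = t·m. Then: (i) this action satisfies the defining relations of Λ_e, making M a (k[t]/(t²)) ⊗_k Λ_e-module, free over k[t]/(t²), with M/tM isomorphic to the simple module S_e; (ii) there is no (k[t]/(t³)) ⊗_k Λ_e-module M′ that is free of rank one as a k[t]/(t³)-module and satisfies M′/t²M′ ≅ M as (k[t]/(t²)) ⊗_k Λ_e-modules. -/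
set_option synthInstance.maxHeartbeats 1000000
set_option maxHeartbeats 1000000

/-! Common framework: representations of the quiver Q_e / modules over the
generalized Brauer star algebra Λ_e, encoded as a module `V` together with
endomorphisms `v i` (images of the vertex idempotents), `a i` (images of the
arrows; `a i` is the arrow leaving vertex `i`, with `a ⟨e-1⟩` the arrow
`α_e : e → 1`) and `d` (image of the loop `δ`). -/

namespace GBTA

variable {R : Type} [CommRing R] {e : ℕ}

/-- `k[t]/(t²)`. -/
noncomputable abbrev Rtwo (k : Type) [Field k] : Type :=
  Polynomial k ⧸ Ideal.span {(Polynomial.X : Polynomial k) ^ 2}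

/-- The class of `t` in `k[t]/(t²)`. -/
noncomputable def th2 (k : Type) [Field k] : Rtwo k :=
  Ideal.Quotient.mk _ Polynomial.X

/-- `k[t]/(t³)`. -/
noncomputable abbrev Rthree (k : Type) [Field k] : Type :=
  Polynomial k ⧸ Ideal.span {(Polynomial.X : Polynomial k) ^ 3}

/-- The class of `t` in `k[t]/(t³)`. -/
noncomputable def th3 (k : Type) [Field k] : Rthree k :=
  Ideal.Quotient.mk _ Polynomial.X

/-- The rank-one free `k[t]/(t²)`-module concentrated at vertex `e`, with all
`α_i` acting as zero and `δ` acting as multiplication by `t`. -/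
@[reducible] noncomputable def M16 (k : Type) [Field k] (e : ℕ) [NeZero e] :
    PreRep (Rtwo k) e where
  V := Rtwo k
  v i := if i = ve e then 1 else 0
  a _ := 0
  d := th2 k • 1



open Polynomial in
lemma th2_ne (k : Type) [Field k] : th2 k ≠ 0 := by
  rw [th2, Ne, Ideal.Quotient.eq_zero_iff_mem, Ideal.mem_span_singleton]
  intro h
  have := Polynomial.natDegree_le_of_dvd h X_ne_zero
  simp [natDegree_X_pow, natDegree_X] at this

open Polynomial in
lemma th2_sq (k : Type) [Field k] : th2 k * th2 k = 0 := by
  rw [th2, ← map_mul, Ideal.Quotient.eq_zero_iff_mem]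
  exact Ideal.subset_span (by simp [Set.mem_singleton_iff, sq])

open Polynomial in
lemma decomp3 (k : Type) [Field k] (z : Rthree k) :
    ∃ a0 a1 a2 : k, z = algebraMap k (Rthree k) a0 + algebraMap k (Rthree k) a1 * th3 k
      + algebraMap k (Rthree k) a2 * (th3 k * th3 k) := by
  obtain ⟨p, rfl⟩ := Ideal.Quotient.mk_surjective z
  set q := p %ₘ (X ^ 3 : Polynomial k) with hq
  have hmonic : (X ^ 3 : Polynomial k).Monic := monic_X_pow 3
  have hdeg : q.natDegree < 3 := by
    have h1 : q.degree < (X ^ 3 : Polynomial k).degree := degree_modByMonic_lt p hmonic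
    rw [degree_X_pow] at h1
    rcases eq_or_ne q 0 with h | h
    · simp [h]
    · exact (natDegree_lt_iff_degree_lt h).mpr (by exact_mod_cast h1)
  have hsplit : Ideal.Quotient.mk (Ideal.span {(X : Polynomial k) ^ 3}) p
      = Ideal.Quotient.mk _ q := by
    conv_lhs => rw [← modByMonic_add_div p (X ^ 3)]
    rw [map_add, map_mul, Ideal.Quotient.eq_zero_iff_mem.mpr
      (Ideal.subset_span (Set.mem_singleton _)), zero_mul, add_zero]
  refine ⟨q.coeff 0, q.coeff 1, q.coeff 2, ?_⟩
  rw [hsplit]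
  conv_lhs => rw [q.as_sum_range' 3 hdeg]
  rw [Finset.sum_range_succ, Finset.sum_range_succ, Finset.sum_range_one]
  have hC : ∀ a : k, algebraMap k (Rthree k) a = Ideal.Quotient.mk _ (C a) := fun a => rfl
  simp only [map_add, hC, th3, ← map_mul, ← C_mul_X_pow_eq_monomial]
  ring_nf

open Polynomial in
lemma sqzero (k : Type) [Field k] (u : Rthree k) (h : u * u = 0) :
    ∃ w : Rthree k, u = (th3 k * th3 k) * w := by
  obtain ⟨p, hp⟩ := Ideal.Quotient.mk_surjective u
  have hdvd : (X : Polynomial k) ^ 3 ∣ p * p := by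
    rw [← Ideal.mem_span_singleton, ← Ideal.Quotient.eq_zero_iff_mem, map_mul, hp, h]
  have hXp : (X : Polynomial k) ∣ p :=
    prime_X.dvd_of_dvd_pow (n := 2) (by rw [sq]; exact dvd_trans ⟨X ^ 2, by ring⟩ hdvd)
  obtain ⟨q, hq⟩ := hXp
  have hXq : (X : Polynomial k) ∣ q := by
    apply prime_X.dvd_of_dvd_pow (n := 2)
    have h2 : (X : Polynomial k) ^ 2 * X ∣ X ^ 2 * q ^ 2 := by
      rw [hq] at hdvd
      calc (X : Polynomial k) ^ 2 * X = X ^ 3 := by ring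
      _ ∣ X * q * (X * q) := hdvd
      _ = X ^ 2 * q ^ 2 := by ring
    exact (mul_dvd_mul_iff_left (pow_ne_zero 2 X_ne_zero)).mp h2
  obtain ⟨r, hr⟩ := hXq
  refine ⟨Ideal.Quotient.mk _ r, ?_⟩
  rw [← hp, hq, hr, th3, ← map_mul, ← map_mul]
  ring_nf

lemma cyc_zero {R : Type} [CommRing R] {e : ℕ} [NeZero e] (ρ : PreRep R e)
    (h : ∀ i, ρ.a i = 0) (i : Fin e) : cyc ρ i = 0 := by
  apply List.prod_eq_zero
  simp only [List.mem_map]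
  refine ⟨0, ?_, h _⟩
  simp only [bind_pure_comp, Functor.map, List.mem_map, List.mem_reverse, List.mem_range]
  exact ⟨0, Nat.pos_of_ne_zero (NeZero.ne e), by simp⟩

open Polynomial in
noncomputable def piTwo (k : Type) [Field k] : Rtwo k →+* k :=
  Ideal.Quotient.lift _ (Polynomial.evalRingHom 0) (by
    intro a ha
    rw [Ideal.mem_span_singleton] at ha
    obtain ⟨c, rfl⟩ := ha
    simp)

open Polynomial in
lemma piTwo_mk (k : Type) [Field k] (p : Polynomial k) :
    piTwo k (Ideal.Quotient.mk _ p) = p.eval 0 := rfl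


lemma ite_end_apply {R : Type} [CommRing R] (P : Prop) [Decidable P] (x : R) :
    (if P then (1 : Module.End R R) else 0) x = if P then x else 0 := by
  split <;> rfl

lemma smul_one_end_apply {R : Type} [CommRing R] (t : R) (x : R) :
    (t • (1 : Module.End R R)) x = t * x := rfl

@[reducible] def pointRep (R : Type) [CommRing R] (e : ℕ) [NeZero e] (t : R) : PreRep R e where
  V := R
  v i := if i = ve e then 1 else 0
  a _ := 0
  d := t • 1

lemma pointSat (R : Type) [CommRing R] (e : ℕ) [NeZero e] (t : R) (ht : t * t = 0) :
    Satisfies (pointRep R e t) := by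
  have ha0 : ∀ i, (pointRep R e t).a i = 0 := fun _ => rfl
  refine ⟨?_, ?_, ?_, ?_, ?_, ?_, ?_, ?_, ?_⟩
  · intro i j hij
    show (if i = ve e then (1 : Module.End R R) else 0) * (if j = ve e then 1 else 0) = 0
    rcases eq_or_ne i (ve e) with h | h <;> rcases eq_or_ne j (ve e) with h2 | h2 <;>
      simp [h, h2]
    exact absurd (h.trans h2.symm) hij
  · intro i
    show (if i = ve e then (1 : Module.End R R) else 0) * (if i = ve e then 1 else 0) = _
    rcases eq_or_ne i (ve e) with h | h <;> simp [h]
  · show (∑ i : Fin e, if i = ve e then (1 : Module.End R R) else 0) = 1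
    simp [Finset.sum_ite_eq']
  · intro i
    show (0 : Module.End R R) = _ * 0 * _
    rw [mul_zero, zero_mul]
  · show t • 1 = (if ve e = ve e then (1 : Module.End R R) else 0) * (t • 1) *
      (if ve e = ve e then 1 else 0)
    rw [if_pos rfl, one_mul, mul_one]
  · show (t • (1 : Module.End R R)) * 0 = 0
    rw [mul_zero]
  · show (0 : Module.End R R) * (t • 1) = 0
    rw [zero_mul]
  · rw [cyc_zero _ ha0, mul_zero]
    show (t • (1 : Module.End R R)) * (t • 1) = 0
    rw [smul_mul_smul_comm, ht, zero_smul]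
  · intro i _
    show (0 : Module.End R R) * _ = 0
    rw [zero_mul]

set_option maxHeartbeats 4000000 in
/-- The rank-one free `k[t]/(t²)`-module `M` concentrated at
vertex `e` with `α_i = 0` and `δ = t` satisfies the relations of `Λ_e` and
reduces mod `t` to the simple module `S_e`; and there is no `k[t]/(t³) ⊗ Λ_e`-module
`M'`, free of rank one over `k[t]/(t³)`, with `M'/t²M' ≅ M`. -/
theorem no_lift_of_Se (k : Type) [Field k] (e : ℕ) (he : 2 ≤ e) [NeZero e] :
    (Satisfies (M16 k e) ∧ Module.Free (Rtwo k) (M16 k e).V ∧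
      ∃ π : (M16 k e).V →+ k, Function.Surjective π ∧
        (∀ x, π x = 0 ↔ ∃ y, x = th2 k * y) ∧
        (∀ (c : k) (x : (M16 k e).V), π (algebraMap k (Rtwo k) c * x) = c * π x) ∧
        (∀ i x, π ((M16 k e).v i x) = (Se k e).v i (π x)) ∧
        (∀ i x, π ((M16 k e).a i x) = 0) ∧
        (∀ x, π ((M16 k e).d x) = 0)) ∧
    ¬ ∃ M' : PreRep (Rthree k) e, Satisfies M' ∧
        (∃ b : M'.V, ∀ x : M'.V, ∃! c : Rthree k, x = c • b) ∧
        ∃ π : M'.V →+ (M16 k e).V, Function.Surjective π ∧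
          (∀ x, π x = 0 ↔ ∃ y, x = (th3 k * th3 k) • y) ∧
          (∀ (c : k) x, π (algebraMap k (Rthree k) c • x) = algebraMap k (Rtwo k) c • π x) ∧
          (∀ x, π (th3 k • x) = th2 k • π x) ∧
          (∀ i x, π (M'.v i x) = (M16 k e).v i (π x)) ∧
          (∀ i x, π (M'.a i x) = (M16 k e).a i (π x)) ∧
          (∀ x, π (M'.d x) = (M16 k e).d (π x)) := by
  constructor
  · refine ⟨pointSat (Rtwo k) e (th2 k) (th2_sq k), inferInstance, ?_⟩
    refine ⟨(piTwo k).toAddMonoidHom, ?_, ?_, ?_, ?_, ?_, ?_⟩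
    · intro c
      refine ⟨algebraMap k (Rtwo k) c, ?_⟩
      show Polynomial.eval 0 (Polynomial.C c) = c
      simp
    · intro x
      obtain ⟨p, rfl⟩ := Ideal.Quotient.mk_surjective x
      constructor
      · intro hz
        have hz' : Polynomial.eval 0 p = 0 := hz
        have : Polynomial.X ∣ p := by
          have := (Polynomial.dvd_iff_isRoot (p := p) (a := (0 : k))).mpr hz'
          simpa using this
        obtain ⟨q, rfl⟩ := this
        exact ⟨Ideal.Quotient.mk _ q, by rw [th2, ← map_mul]⟩
      · rintro ⟨y, hy⟩
        obtain ⟨q, rfl⟩ := Ideal.Quotient.mk_surjective y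
        rw [hy]
        show (piTwo k) (th2 k * Ideal.Quotient.mk _ q) = 0
        rw [map_mul]
        have h0 : piTwo k (th2 k) = 0 := by simp [th2, piTwo_mk]
        rw [h0, zero_mul]
    · intro c x
      show piTwo k (algebraMap k (Rtwo k) c * x) = c * piTwo k x
      rw [map_mul]
      congr 1
      show Polynomial.eval 0 (Polynomial.C c) = c
      simp
    · intro i x
      show piTwo k ((if i = ve e then (1 : Module.End (Rtwo k) (Rtwo k)) else 0) x)
        = (if i = ve e then (1 : Module.End k k) else 0) (piTwo k x)
      rw [ite_end_apply, ite_end_apply]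
      split
      · rfl
      · exact map_zero _
    · intro i x
      exact map_zero _
    · intro x
      show piTwo k ((th2 k • (1 : Module.End (Rtwo k) (Rtwo k))) x) = 0
      rw [smul_one_end_apply, map_mul]
      have h0 : piTwo k (th2 k) = 0 := by simp [th2, piTwo_mk]
      rw [h0, zero_mul]
  · rintro ⟨M', hSat, ⟨b, hb⟩, π, hsurj, hker, hπk, hπt, hπv, hπa, hπd⟩
    obtain ⟨hv0, hvidem, hvsum, hva, hvd, hda, had, hdd, hac⟩ := hSat
    have huniq : ∀ c c' : Rthree k, c • b = c' • b → c = c' := fun c c' h =>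
      (hb (c • b)).unique rfl h
    choose cv hcv using fun i : Fin e => (hb (M'.v i b)).exists
    choose ca hca using fun i : Fin e => (hb (M'.a i b)).exists
    obtain ⟨wd, hwd⟩ := (hb (M'.d b)).exists
    have horth : ∀ i j : Fin e, i ≠ j → cv j * cv i = 0 := by
      intro i j hij
      apply huniq
      rw [zero_smul (M₀ := Rthree k) b]
      have h1 : M'.v i (M'.v j b) = 0 := by
        have := congrArg (fun f : Module.End (Rthree k) M'.V => f b) (hv0 i j hij)
        simpa [Module.End.mul_apply] using this
      rw [hcv j, map_smul, hcv i, smul_smul] at h1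
      exact h1
    have hne : ∀ i : Fin e, i ≠ i + 1 := by
      intro i h
      have h1 : (0 : Fin e) = 1 := by
        have h' : i + 0 = i + 1 := by rw [add_zero]; exact h
        exact add_left_cancel h'
      have h2 := congrArg Fin.val h1
      rw [Fin.val_zero, Fin.val_one', Nat.mod_eq_of_lt (by omega : 1 < e)] at h2
      exact one_ne_zero h2.symm
    have haz : ∀ i : Fin e, M'.a i = 0 := by
      intro i
      have hRHS : M'.v (i + 1) (M'.a i (M'.v i b)) = ((cv i * ca i) * cv (i + 1)) • b := by
        rw [hcv i, map_smul, hca i, map_smul, map_smul, hcv (i + 1), smul_smul, smul_smul]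
      have h1 : ca i = (cv i * ca i) * cv (i + 1) := by
        apply huniq
        rw [← hca i, ← hRHS]
        have := congrArg (fun f : Module.End (Rthree k) M'.V => f b) (hva i)
        simpa [Module.End.mul_apply] using this
      have hca0 : ca i = 0 := by
        rw [h1]
        have h2 := horth (i + 1) i (fun h => hne i h.symm)
        calc (cv i * ca i) * cv (i + 1) = (cv i * cv (i + 1)) * ca i := by ring
        _ = 0 := by rw [h2, zero_mul]
      refine LinearMap.ext fun x => ?_
      obtain ⟨c, hc⟩ := (hb x).exists
      rw [LinearMap.zero_apply, hc, map_smul, hca i, hca0, zero_smul (M₀ := Rthree k) b, smul_zero]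
    have hcyc : cyc M' (ve e) = 0 := cyc_zero M' haz _
    have hwd2 : wd * wd = 0 := by
      apply huniq
      rw [zero_smul (M₀ := Rthree k) b]
      have h1 : M'.d (M'.d b) = 0 := by
        have := congrArg (fun f : Module.End (Rthree k) M'.V => f b) hdd
        simpa [Module.End.mul_apply, hcyc] using this
      rw [hwd, map_smul, hwd, smul_smul] at h1
      exact h1
    obtain ⟨w, hw⟩ := sqzero k wd hwd2
    have hπdb : π (M'.d b) = 0 := (hker _).mpr ⟨w • b, by rw [hwd, hw, mul_smul]⟩
    have htb : th2 k * π b = 0 := by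
      have h1 := hπd b
      rw [hπdb] at h1
      have h2 : (M16 k e).d (π b) = th2 k * π b := smul_one_end_apply _ _
      rw [h2] at h1
      exact h1.symm
    obtain ⟨x, hx⟩ := hsurj 1
    obtain ⟨c, hc⟩ := (hb x).exists
    obtain ⟨a0, a1, a2, hdec⟩ := decomp3 k c
    have hπx : (1 : Rtwo k) = algebraMap k (Rtwo k) a0 * π b := by
      rw [← hx, hc, hdec, add_smul, add_smul, map_add, map_add]
      rw [mul_smul, mul_smul, mul_smul]
      rw [hπk, hπk, hπk, hπt, hπt, hπt]
      simp only [smul_eq_mul]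
      rw [htb]
      ring_nf
    have hcontra : th2 k = 0 := by
      calc th2 k = th2 k * 1 := (mul_one _).symm
      _ = th2 k * (algebraMap k (Rtwo k) a0 * π b) := by rw [← hπx]
      _ = algebraMap k (Rtwo k) a0 * (th2 k * π b) := by ring
      _ = 0 := by rw [htb, mul_zero]
    exact th2_ne k hcontra

end GBTA
end
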